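/- Let f be a tropical polynomial in n variables and let x ∈ ℝⁿ with x ∉ Trop(f). Then the linear functional φ_x attains its minimum over the Newton polyhedron N(f) at exactly one point of N(f), and this point is a vertex (extreme point) of N(f). -/

import Mathlib

open Finset

/-- A tropical polynomial in `n` variables: `k ≥ 1` monomials with exponent
vectors `a i : Fin n → ℕ` and coefficients `c i : ℝ`, the pairs `(a i, c i)`
being pairwise distinct. -/
structure TropPoly (n : ℕ) where
  k : ℕ
  hk : 0 < k
  a : Fin k → Fin n → ℕ
  c : Fin k → ℝ
  distinct : Function.Injective (fun i => (a i, c i))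

namespace TropPoly

variable {n : ℕ}

/-- Value of the `i`-th tropical monomial at `x`: `⟨a i, x⟩ + c i`. -/
def mono (f : TropPoly n) (i : Fin f.k) (x : Fin n → ℝ) : ℝ :=
  (∑ j, (f.a i j : ℝ) * x j) + f.c i

/-- Value of the tropical polynomial: `f(x) = min_i (⟨a i, x⟩ + c i)`. -/
def eval (f : TropPoly n) (x : Fin n → ℝ) : ℝ :=
  Finset.univ.inf' ⟨⟨0, f.hk⟩, Finset.mem_univ _⟩ (fun i => f.mono i x)

/-- The tropical hypersurface `Trop(f)`: points where the minimum is attained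
at least at two distinct monomials. -/
def tropSet (f : TropPoly n) : Set (Fin n → ℝ) :=
  {x | ∃ i j : Fin f.k, i ≠ j ∧ f.mono i x = f.eval x ∧ f.mono j x = f.eval x}

/-- The Newton polyhedron `N(f) ⊆ ℝ^{n+1}`: the convex hull of the union of
the vertical rays `{(a i, c) : c ≥ c i}`. -/
def newton (f : TropPoly n) : Set ((Fin n → ℝ) × ℝ) :=
  convexHull ℝ {p | ∃ i : Fin f.k, p.1 = (fun j => (f.a i j : ℝ)) ∧ f.c i ≤ p.2}

end TropPoly

/-- The linear functional `φ_x(z, a) = ⟨x, z⟩ + a` on `ℝ^{n+1}`. -/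
def phi {n : ℕ} (x : Fin n → ℝ) (p : (Fin n → ℝ) × ℝ) : ℝ :=
  (∑ j, x j * p.1 j) + p.2

/-- The convex cone generated by a set `S`: all nonnegative linear
combinations of elements of `S`. -/
def coneGen {E : Type*} [AddCommMonoid E] [Module ℝ E] (S : Set E) : Set E :=
  {y | ∃ (m : ℕ) (t : Fin m → ℝ) (p : Fin m → E),
    (∀ i, 0 ≤ t i) ∧ (∀ i, p i ∈ S) ∧ y = ∑ i, t i • p i}


section Aux

variable {n : ℕ}

/-- `phi x` as a linear map. -/
def phiL (x : Fin n → ℝ) : ((Fin n → ℝ) × ℝ) →ₗ[ℝ] ℝ where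
  toFun := phi x
  map_add' p q := by
    simp only [phi, Prod.fst_add, Prod.snd_add, Pi.add_apply, mul_add,
      Finset.sum_add_distrib]
    ring
  map_smul' c p := by
    simp only [phi, Prod.smul_fst, Prod.smul_snd, Pi.smul_apply, smul_eq_mul,
      RingHom.id_apply]
    rw [mul_add, Finset.mul_sum]
    congr 1
    exact Finset.sum_congr rfl fun j _ => by ring

lemma phiL_apply (x : Fin n → ℝ) (p : (Fin n → ℝ) × ℝ) : phiL x p = phi x p := rfl

end Aux

/-- if `x ∉ Trop(f)`, then `φ_x` attains its minimum over `N(f)`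
at exactly one point, and this point is an extreme point of `N(f)`. -/
theorem unique_extreme_minimizer_of_not_mem_tropSet {n : ℕ} (f : TropPoly n)
    (x : Fin n → ℝ) (hx : x ∉ f.tropSet) :
    ∃ p : (Fin n → ℝ) × ℝ,
      (p ∈ f.newton ∧ ∀ r ∈ f.newton, phi x p ≤ phi x r) ∧
      (∀ q : (Fin n → ℝ) × ℝ,
        (q ∈ f.newton ∧ ∀ r ∈ f.newton, phi x q ≤ phi x r) → q = p) ∧
      p ∈ Set.extremePoints ℝ f.newton := by
    classical
  set S : Set ((Fin n → ℝ) × ℝ) :=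
    {p | ∃ i : Fin f.k, p.1 = (fun j => (f.a i j : ℝ)) ∧ f.c i ≤ p.2} with hSdef
  obtain ⟨i₀, -, hi₀⟩ := Finset.exists_mem_eq_inf'
    (⟨⟨0, f.hk⟩, Finset.mem_univ _⟩ : (Finset.univ : Finset (Fin f.k)).Nonempty)
    (fun i => f.mono i x)
  have hi₀' : f.eval x = f.mono i₀ x := hi₀
  have huniq : ∀ i, f.mono i x = f.eval x → i = i₀ := by
    intro i hi
    by_contra h
    exact hx ⟨i, i₀, h, hi, hi₀'.symm⟩
  set p : (Fin n → ℝ) × ℝ := ((fun j => (f.a i₀ j : ℝ)), f.c i₀) with hpdef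
  have hpS : p ∈ S := ⟨i₀, rfl, le_refl _⟩
  have hpN : p ∈ f.newton := subset_convexHull ℝ _ hpS
  have hphip : phi x p = f.eval x := by
    have h : phi x p = f.mono i₀ x := by
      simp only [phi, TropPoly.mono, hpdef]
      congr 1
      exact Finset.sum_congr rfl fun j _ => mul_comm _ _
    rw [h, hi₀']
  have hSlb : ∀ q ∈ S, f.eval x ≤ phi x q ∧ (phi x q = f.eval x → q = p) := by
    rintro q ⟨i, hq1, hq2⟩
    have hmono : phi x q = f.mono i x + (q.2 - f.c i) := by
      simp only [phi, TropPoly.mono, hq1]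
      have : (∑ j, x j * (f.a i j : ℝ)) = ∑ j, (f.a i j : ℝ) * x j :=
        Finset.sum_congr rfl fun j _ => mul_comm _ _
      rw [this]; ring
    have h1 : f.eval x ≤ f.mono i x := Finset.inf'_le _ (Finset.mem_univ i)
    constructor
    · rw [hmono]; linarith
    · intro heq
      have hm : f.mono i x = f.eval x := by rw [hmono] at heq; linarith
      have hc : q.2 = f.c i := by rw [hmono] at heq; linarith
      have hii : i = i₀ := huniq i hm
      subst hii
      exact Prod.ext hq1 hc
  have hNlb : ∀ q ∈ f.newton, f.eval x ≤ phi x q ∧ (phi x q = f.eval x → q = p) := by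
    intro q hq
    rw [TropPoly.newton, _root_.convexHull_eq] at hq
    obtain ⟨ι, t, w, z, hw0, hw1, hzS, hq⟩ := hq
    rw [Finset.centerMass_eq_of_sum_1 _ _ hw1] at hq
    have hphi : phi x q = ∑ i ∈ t, w i * phi x (z i) := by
      rw [← hq, ← phiL_apply, map_sum]
      exact Finset.sum_congr rfl fun i _ => by rw [map_smul]; rfl
    have hterm : ∀ i ∈ t, w i * f.eval x ≤ w i * phi x (z i) := fun i hi =>
      mul_le_mul_of_nonneg_left (hSlb _ (hzS i hi)).1 (hw0 i hi)
    have hevalsum : f.eval x = ∑ i ∈ t, w i * f.eval x := by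
      rw [← Finset.sum_mul, hw1, one_mul]
    have hlb : f.eval x ≤ phi x q := by
      rw [hphi, hevalsum]
      exact Finset.sum_le_sum hterm
    refine ⟨hlb, fun heq => ?_⟩
    have hsum : ∑ i ∈ t, w i * (phi x (z i) - f.eval x) = 0 := by
      have : ∑ i ∈ t, w i * (phi x (z i) - f.eval x)
          = (∑ i ∈ t, w i * phi x (z i)) - ∑ i ∈ t, w i * f.eval x := by
        rw [← Finset.sum_sub_distrib]
        exact Finset.sum_congr rfl fun i _ => by ring
      rw [this, ← hphi, heq, ← hevalsum, sub_self]
    have hzero : ∀ i ∈ t, w i * (phi x (z i) - f.eval x) = 0 :=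
      (Finset.sum_eq_zero_iff_of_nonneg fun i hi =>
        mul_nonneg (hw0 i hi) (by linarith [(hSlb _ (hzS i hi)).1])).mp hsum
    have hzp : ∀ i ∈ t, w i • z i = w i • p := by
      intro i hi
      rcases eq_or_ne (w i) 0 with h | h
      · simp [h]
      · have hphiz : phi x (z i) = f.eval x := by
          rcases mul_eq_zero.mp (hzero i hi) with h' | h'
          · exact absurd h' h
          · linarith
        rw [(hSlb _ (hzS i hi)).2 hphiz]
    calc q = ∑ i ∈ t, w i • z i := hq.symm
      _ = ∑ i ∈ t, w i • p := Finset.sum_congr rfl hzp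
      _ = p := by rw [← Finset.sum_smul, hw1, one_smul]
  refine ⟨p, ⟨hpN, fun r hr => ?_⟩, ?_, ?_⟩
  · rw [hphip]; exact (hNlb r hr).1
  · rintro q ⟨hqN, hqmin⟩
    have hle : phi x q ≤ f.eval x := hphip ▸ hqmin p hpN
    exact (hNlb q hqN).2 (le_antisymm hle (hNlb q hqN).1)
  · refine ⟨hpN, fun q hq r hr hseg => ?_⟩
    obtain ⟨a, b, ha, hb, hab, habp⟩ := hseg
    have hq' := (hNlb q hq).1
    have hr' := (hNlb r hr).1
    have h1 : phi x (a • q + b • r) = a * phi x q + b * phi x r := by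
      rw [← phiL_apply, map_add, map_smul, map_smul]; rfl
    have heval : a * phi x q + b * phi x r = f.eval x := by
      rw [← h1, habp, hphip]
    have h3 : a * f.eval x + b * f.eval x = f.eval x := by
      rw [← add_mul, hab, one_mul]
    have t1 : 0 ≤ a * (phi x q - f.eval x) := mul_nonneg ha.le (by linarith)
    have t2 : 0 ≤ b * (phi x r - f.eval x) := mul_nonneg hb.le (by linarith)
    have h2 : a * (phi x q - f.eval x) + b * (phi x r - f.eval x) = 0 := by
      rw [mul_sub, mul_sub]; linarith
    have hqe : phi x q = f.eval x := by
      have ha0 : a * (phi x q - f.eval x) = 0 := by linarith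
      rcases mul_eq_zero.mp ha0 with h' | h'
      · exact absurd h' ha.ne'
      · linarith
    have hre : phi x r = f.eval x := by
      have hb0 : b * (phi x r - f.eval x) = 0 := by linarith
      rcases mul_eq_zero.mp hb0 with h' | h'
      · exact absurd h' hb.ne'
      · linarith
    exact (hNlb q hq).2 hqe
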